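/- The naïve portfolio T_h consisting of the h schools with the largest values of f_j t_j satisfies v(T_h) ≥ (1/h) v(X_h), where X_h is an optimal portfolio of cardinality at most h. -/

import Mathlib

noncomputable def val (f t : ℕ → ℝ) (X : Finset ℕ) : ℝ :=
  ∑ j ∈ X, f j * t j * ∏ i ∈ X.filter (fun i => j < i), (1 - f i)

lemma telescope_aux (f : ℕ → ℝ) (S : Finset ℕ) :
    ∑ l ∈ S, f l * ∏ i ∈ S.filter (fun i => l < i), (1 - f i)
      = 1 - ∏ i ∈ S, (1 - f i) := by
  induction S using Finset.induction_on_max with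
  | empty => simp
  | insert a s ha ih =>
    have hna : a ∉ s := fun hmem => lt_irrefl a (ha a hmem)
    have h1 : (insert a s).filter (fun i => a < i) = ∅ := by
      ext i
      simp only [Finset.mem_filter, Finset.mem_insert, Finset.notMem_empty, iff_false, not_and]
      rintro (rfl | hi)
      · exact lt_irrefl _
      · exact not_lt.2 (ha i hi).le
    have h2 : ∀ l ∈ s, (insert a s).filter (fun i => l < i)
        = insert a (s.filter (fun i => l < i)) := by
      intro l hl
      ext i
      simp only [Finset.mem_filter, Finset.mem_insert]
      constructor
      · rintro ⟨rfl | hi, hlt⟩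
        · exact Or.inl rfl
        · exact Or.inr ⟨hi, hlt⟩
      · rintro (rfl | ⟨hi, hlt⟩)
        · exact ⟨Or.inl rfl, ha l hl⟩
        · exact ⟨Or.inr hi, hlt⟩
    rw [Finset.sum_insert hna, h1, Finset.prod_insert hna]
    have h3 : ∑ l ∈ s, f l * ∏ i ∈ (insert a s).filter (fun i => l < i), (1 - f i)
        = (1 - f a) * ∑ l ∈ s, f l * ∏ i ∈ s.filter (fun i => l < i), (1 - f i) := by
      rw [Finset.mul_sum]
      refine Finset.sum_congr rfl fun l hl => ?_
      have hna' : a ∉ s.filter (fun i => l < i) := fun hm => hna (Finset.mem_of_mem_filter a hm)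
      rw [h2 l hl, Finset.prod_insert hna']
      ring
    rw [h3, ih]
    simp
    ring

lemma key_aux (f t : ℕ → ℝ) (T : Finset ℕ) (hf0 : ∀ i ∈ T, 0 ≤ f i) (hf1 : ∀ i ∈ T, f i ≤ 1)
    (ht : ∀ i ∈ T, 0 ≤ t i) (hmono : Monotone t) {j : ℕ} (hj : j ∈ T) :
    f j * t j ≤ val f t T := by
  set U := T.filter (fun i => j ≤ i) with hU
  have hUsub : U ⊆ T := Finset.filter_subset _ _
  have hjU : j ∈ U := Finset.mem_filter.2 ⟨hj, le_refl j⟩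
  have hprodnn : ∀ (S : Finset ℕ), S ⊆ T → 0 ≤ ∏ i ∈ S, (1 - f i) :=
    fun S hS => Finset.prod_nonneg fun i hi => by linarith [hf1 i (hS hi)]
  have stepA : ∑ l ∈ U, f l * t l * ∏ i ∈ T.filter (fun i => l < i), (1 - f i) ≤ val f t T := by
    apply Finset.sum_le_sum_of_subset_of_nonneg hUsub
    intro l hl _
    have := hprodnn (T.filter (fun i => l < i)) (Finset.filter_subset _ _)
    have := hf0 l hl; have := ht l hl
    positivity
  have stepB : ∀ l ∈ U, T.filter (fun i => l < i) = U.filter (fun i => l < i) := by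
    intro l hl
    have hjl : j ≤ l := (Finset.mem_filter.1 hl).2
    ext i
    simp only [hU, Finset.mem_filter]
    constructor
    · rintro ⟨hi, hlt⟩; exact ⟨⟨hi, le_of_lt (lt_of_le_of_lt hjl hlt)⟩, hlt⟩
    · rintro ⟨⟨hi, _⟩, hlt⟩; exact ⟨hi, hlt⟩
  have stepC : t j * ∑ l ∈ U, f l * ∏ i ∈ U.filter (fun i => l < i), (1 - f i)
      ≤ ∑ l ∈ U, f l * t l * ∏ i ∈ U.filter (fun i => l < i), (1 - f i) := by
    rw [Finset.mul_sum]
    apply Finset.sum_le_sum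
    intro l hl
    have hjl : j ≤ l := (Finset.mem_filter.1 hl).2
    have h1 : 0 ≤ f l := hf0 l (hUsub hl)
    have h2 : 0 ≤ ∏ i ∈ U.filter (fun i => l < i), (1 - f i) :=
      hprodnn _ ((Finset.filter_subset _ _).trans hUsub)
    have h3 : t j ≤ t l := hmono hjl
    nlinarith [mul_le_mul_of_nonneg_left h3 (mul_nonneg h1 h2)]
  have stepD : ∏ i ∈ U, (1 - f i) ≤ 1 - f j := by
    rw [← Finset.mul_prod_erase U _ hjU]
    have h1 : ∏ i ∈ U.erase j, (1 - f i) ≤ 1 :=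
      Finset.prod_le_one (fun i hi => by linarith [hf1 i (hUsub (Finset.erase_subset _ _ hi))])
        (fun i hi => by linarith [hf0 i (hUsub (Finset.erase_subset _ _ hi))])
    have h2 : 0 ≤ 1 - f j := by linarith [hf1 j hj]
    nlinarith
  have htj : 0 ≤ t j := ht j hj
  calc f j * t j ≤ t j * (1 - ∏ i ∈ U, (1 - f i)) := by nlinarith
    _ = t j * ∑ l ∈ U, f l * ∏ i ∈ U.filter (fun i => l < i), (1 - f i) := by
        rw [telescope_aux f U]
    _ ≤ ∑ l ∈ U, f l * t l * ∏ i ∈ U.filter (fun i => l < i), (1 - f i) := stepC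
    _ = ∑ l ∈ U, f l * t l * ∏ i ∈ T.filter (fun i => l < i), (1 - f i) :=
        Finset.sum_congr rfl fun l hl => by rw [stepB l hl]
    _ ≤ val f t T := stepA

/-- the naïve portfolio is a 1/h-approximation. -/
theorem stmt_6 (m h : ℕ) (f t : ℕ → ℝ) (T X : Finset ℕ)
    (hh : 1 ≤ h)
    (hf : ∀ j ∈ Finset.Icc 1 m, 0 < f j ∧ f j ≤ 1)
    (ht : ∀ j ∈ Finset.Icc 1 m, 0 ≤ t j) (hmono : Monotone t)
    (hT : T ⊆ Finset.Icc 1 m) (hTcard : T.card = h)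
    (hTopt : ∀ S ⊆ Finset.Icc 1 m, S.card = h →
      ∑ j ∈ S, f j * t j ≤ ∑ j ∈ T, f j * t j)
    (hXsub : X ⊆ Finset.Icc 1 m) (hXcard : X.card ≤ h)
    (hXopt : ∀ S ⊆ Finset.Icc 1 m, S.card ≤ h → val f t S ≤ val f t X) :
    (1 / h : ℝ) * val f t X ≤ val f t T := by
  have hfI : ∀ j ∈ Finset.Icc 1 m, 0 ≤ f j := fun j hj => (hf j hj).1.le
  have h1 : val f t X ≤ ∑ j ∈ X, f j * t j := by
    apply Finset.sum_le_sum
    intro j hj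
    have hft : 0 ≤ f j * t j := mul_nonneg (hfI j (hXsub hj)) (ht j (hXsub hj))
    have hp1 : ∏ i ∈ X.filter (fun i => j < i), (1 - f i) ≤ 1 :=
      Finset.prod_le_one
        (fun i hi => by linarith [(hf i (hXsub (Finset.mem_of_mem_filter i hi))).2])
        (fun i hi => by linarith [(hf i (hXsub (Finset.mem_of_mem_filter i hi))).1])
    nlinarith
  have hhm : h ≤ (Finset.Icc 1 m).card := hTcard ▸ Finset.card_le_card hT
  obtain ⟨X', hXX', hX'sub, hX'card⟩ := Finset.exists_subsuperset_card_eq hXsub hXcard hhm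
  have h2 : ∑ j ∈ X, f j * t j ≤ ∑ j ∈ X', f j * t j :=
    Finset.sum_le_sum_of_subset_of_nonneg hXX'
      (fun j hj _ => mul_nonneg (hfI j (hX'sub hj)) (ht j (hX'sub hj)))
  have h3 := hTopt X' hX'sub hX'card
  have h4 : ∑ j ∈ T, f j * t j ≤ (h : ℝ) * val f t T := by
    have hkey : ∀ j ∈ T, f j * t j ≤ val f t T := fun j hj =>
      key_aux f t T (fun i hi => hfI i (hT hi)) (fun i hi => (hf i (hT hi)).2)
        (fun i hi => ht i (hT hi)) hmono hj
    calc ∑ j ∈ T, f j * t j ≤ ∑ _j ∈ T, val f t T := Finset.sum_le_sum hkey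
      _ = (T.card : ℝ) * val f t T := by rw [Finset.sum_const, nsmul_eq_mul]
      _ = (h : ℝ) * val f t T := by rw [hTcard]
  have hhpos : (0:ℝ) < h := by exact_mod_cast hh
  rw [div_mul_eq_mul_div, one_mul, div_le_iff₀ hhpos]
  linarith
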